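/- arXiv:2510.18146 — 2 statements merged into one kernel-verified Lean document; each statement's English description precedes it below -/
import Mathlib

section
/- Let c : ℕ³ → ℝ satisfy: 1 ≤ c(i) for all i; c(i) < c(i') whenever i ≤ i' componentwise and i ≠ i'; and for every k ∈ ℕ³ there exists M_k > 0 such that |c(i) − c(i')| ≤ M_k whenever |i_t − i'_t| ≤ k_t for t = 1,2,3. Define the linear operator D : V → V by Dξ = c(n) ξ for ξ ∈ H_n. Let T be a bounded operator on H and k ∈ ℕ³ be such that for every n ∈ ℕ³, T(H_n) is contained in the (finite) sum of the subspaces H_i over those i ∈ ℕ³ with |i_t − n_t| ≤ k_t for t = 1,2,3. Then for every n ∈ ℕ³ and every ξ ∈ H_n one has ‖D(Tξ) − T(Dξ)‖ ≤ M_k · ‖T‖ · ‖ξ‖, and there exists a bounded operator S on H with Sξ = D(Tξ) − T(Dξ) for every ξ ∈ V. -/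
open Submodule
open scoped ComplexInnerProductSpace

/-- `i` and `i'` in `ℕ³` are within band `k` of each other: `|i_t − i'_t| ≤ k_t` for `t = 1,2,3`. -/
def Near3 (k i i' : ℕ × ℕ × ℕ) : Prop :=
  |(i.1 : ℤ) - (i'.1 : ℤ)| ≤ (k.1 : ℤ) ∧ |(i.2.1 : ℤ) - (i'.2.1 : ℤ)| ≤ (k.2.1 : ℤ) ∧
    |(i.2.2 : ℤ) - (i'.2.2 : ℤ)| ≤ (k.2.2 : ℤ)

lemma aux_mod_close {d a b : ℕ} (hmod : a % (2*d+1) = b % (2*d+1))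
    (h : |(a:ℤ) - b| ≤ 2*d) : a = b := by
  have hd : ((2*d+1 : ℕ) : ℤ) ∣ (b:ℤ) - a := (Nat.modEq_iff_dvd (n := 2*d+1)).mp hmod
  rw [abs_le] at h
  have := Int.eq_zero_of_abs_lt_dvd hd (by rw [abs_lt]; push_cast; omega)
  omega

lemma aux_norm_sum_sq {H : Type*} [NormedAddCommGroup H] [InnerProductSpace ℂ H]
    {ι : Type*} (s : Finset ι) (f : ι → H)
    (h : ∀ i ∈ s, ∀ j ∈ s, i ≠ j → ⟪f i, f j⟫ = 0) :
    ‖∑ i ∈ s, f i‖ ^ 2 = ∑ i ∈ s, ‖f i‖ ^ 2 := by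
  have h1 : ⟪∑ i ∈ s, f i, ∑ i ∈ s, f i⟫ = ∑ i ∈ s, ⟪f i, f i⟫ := by
    rw [sum_inner]
    refine Finset.sum_congr rfl fun i hi => ?_
    rw [inner_sum]
    exact Finset.sum_eq_single_of_mem i hi fun j hj hne => h i hi j hj hne.symm
  calc ‖∑ i ∈ s, f i‖ ^ 2 = RCLike.re ⟪∑ i ∈ s, f i, ∑ i ∈ s, f i⟫ :=
        (inner_self_eq_norm_sq _).symm
    _ = ∑ i ∈ s, RCLike.re ⟪f i, f i⟫ := by rw [h1, map_sum RCLike.re _ s]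
    _ = ∑ i ∈ s, ‖f i‖ ^ 2 := Finset.sum_congr rfl fun i _ => inner_self_eq_norm_sq _

lemma aux_inner_biSup_zero {H : Type*} [NormedAddCommGroup H] [InnerProductSpace ℂ H]
    {ι : Type*} (Hn : ι → Submodule ℂ H)
    (horth : ∀ m n : ι, m ≠ n → ∀ x ∈ Hn m, ∀ y ∈ Hn n, ⟪x, y⟫ = 0)
    {A B : Set ι} (hAB : ∀ i ∈ A, i ∉ B) {x y : H}
    (hx : x ∈ (⨆ i ∈ A, Hn i : Submodule ℂ H))
    (hy : y ∈ (⨆ i ∈ B, Hn i : Submodule ℂ H)) : ⟪x, y⟫ = 0 := by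
  rw [iSup_subtype'] at hx hy
  obtain ⟨f, hf, rfl⟩ := (mem_iSup_iff_exists_finsupp _ _).mp hx
  obtain ⟨g, hg, rfl⟩ := (mem_iSup_iff_exists_finsupp _ _).mp hy
  rw [Finsupp.sum, Finsupp.sum, sum_inner]
  refine Finset.sum_eq_zero fun i _ => ?_
  rw [inner_sum]
  refine Finset.sum_eq_zero fun j _ => ?_
  exact horth i j (fun hij => hAB i i.2 (hij ▸ j.2)) _ (hf i) _ (hg j)

lemma aux_D_mem {H : Type*} [NormedAddCommGroup H] [InnerProductSpace ℂ H]
    {ι : Type*} {Hn : ι → Submodule ℂ H} (D : H →ₗ[ℂ] H) (c : ι → ℝ)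
    (hD : ∀ n : ι, ∀ ξ ∈ Hn n, D ξ = (c n : ℂ) • ξ)
    {A : Set ι} {x : H} (hx : x ∈ (⨆ i ∈ A, Hn i : Submodule ℂ H)) :
    D x ∈ (⨆ i ∈ A, Hn i : Submodule ℂ H) := by
  rw [iSup_subtype'] at hx ⊢
  obtain ⟨f, hf, rfl⟩ := (mem_iSup_iff_exists_finsupp _ _).mp hx
  rw [Finsupp.sum, map_sum]
  refine Submodule.sum_mem _ fun i _ => ?_
  rw [hD i _ (hf i)]
  exact Submodule.mem_iSup_of_mem i (Submodule.smul_mem _ _ (hf i))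

lemma aux_bound {H : Type*} [NormedAddCommGroup H] [InnerProductSpace ℂ H]
    {ι : Type*} {Hn : ι → Submodule ℂ H}
    (horth : ∀ m n : ι, m ≠ n → ∀ x ∈ Hn m, ∀ y ∈ Hn n, ⟪x, y⟫ = 0)
    (D : H →ₗ[ℂ] H) (c : ι → ℝ)
    (hD : ∀ n : ι, ∀ ξ ∈ Hn n, D ξ = (c n : ℂ) • ξ)
    (T : H →L[ℂ] H) {n : ι} {A : Set ι} {Mk : ℝ} (hMk : 0 ≤ Mk)
    (hA : ∀ i ∈ A, |c i - c n| ≤ Mk) {ξ : H} (hξ : ξ ∈ Hn n)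
    (hTξ : T ξ ∈ (⨆ i ∈ A, Hn i : Submodule ℂ H)) :
    ‖D (T ξ) - T (D ξ)‖ ≤ Mk * ‖T‖ * ‖ξ‖ := by
  rw [iSup_subtype'] at hTξ
  obtain ⟨f, hf, hsum⟩ := (mem_iSup_iff_exists_finsupp _ _).mp hTξ
  rw [Finsupp.sum] at hsum
  set s := f.support with hs
  have horthf : ∀ i ∈ s, ∀ j ∈ s, i ≠ j → ⟪f i, f j⟫ = 0 := fun i _ j _ hij =>
    horth i j (Subtype.coe_injective.ne hij) _ (hf i) _ (hf j)
  have hDT : D (T ξ) = ∑ i ∈ s, (c i : ℂ) • f i := by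
    rw [← hsum, map_sum]
    exact Finset.sum_congr rfl fun i _ => hD i _ (hf i)
  have hTD : T (D ξ) = ∑ i ∈ s, (c n : ℂ) • f i := by
    rw [hD n ξ hξ, map_smul, ← hsum, Finset.smul_sum]
  have hdiff : D (T ξ) - T (D ξ) = ∑ i ∈ s, (((c i : ℝ) - c n : ℝ) : ℂ) • f i := by
    rw [hDT, hTD, ← Finset.sum_sub_distrib]
    refine Finset.sum_congr rfl fun i _ => ?_
    rw [← sub_smul]
    push_cast
    ring_nf
  have hsq : ‖D (T ξ) - T (D ξ)‖ ^ 2 ≤ (Mk * ‖T‖ * ‖ξ‖) ^ 2 := by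
    rw [hdiff, aux_norm_sum_sq s _ (fun i hi j hj hij => by
      rw [inner_smul_left, inner_smul_right, horthf i hi j hj hij, mul_zero, mul_zero])]
    have h1 : ∀ i ∈ s, ‖(((c i : ℝ) - c n : ℝ) : ℂ) • f i‖ ^ 2 ≤ Mk ^ 2 * ‖f i‖ ^ 2 := by
      intro i hi
      rw [norm_smul, Complex.norm_real, Real.norm_eq_abs, mul_pow]
      have := hA i i.2
      gcongr
    calc ∑ i ∈ s, ‖(((c i : ℝ) - c n : ℝ) : ℂ) • f i‖ ^ 2
        ≤ ∑ i ∈ s, Mk ^ 2 * ‖f i‖ ^ 2 := Finset.sum_le_sum h1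
      _ = Mk ^ 2 * ‖T ξ‖ ^ 2 := by
          rw [← Finset.mul_sum, ← aux_norm_sum_sq s _ horthf, hsum]
      _ ≤ (Mk * ‖T‖ * ‖ξ‖) ^ 2 := by
          have := T.le_opNorm ξ
          rw [mul_pow, mul_pow]
          nlinarith [sq_nonneg Mk,
            mul_le_mul this this (norm_nonneg (T ξ)) (by positivity)]
  have hnn : (0:ℝ) ≤ Mk * ‖T‖ * ‖ξ‖ := by positivity
  nlinarith [norm_nonneg (D (T ξ) - T (D ξ))]

/-- The `ℕ³`-indexed version of the commutator-bound lemma: if `D` acts on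
`Hn n` by the scalar `c n`, where `c : ℕ³ → ℝ` satisfies `1 ≤ c`, is strictly monotone for the
componentwise order, and satisfies `|c i − c i'| ≤ M k` whenever `i, i'` are within band `k`,
and if the bounded operator `T` maps each `Hn n` into the sum of the `Hn i` with `i` within band
`k` of `n`, then `‖D(Tξ) − T(Dξ)‖ ≤ M k · ‖T‖ · ‖ξ‖` for `ξ ∈ Hn n`, and the commutator extends
to a bounded operator on `H`. -/
theorem stmt1
    {H : Type*} [NormedAddCommGroup H] [InnerProductSpace ℂ H] [CompleteSpace H]
    (Hn : ℕ × ℕ × ℕ → Submodule ℂ H)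
    (horth : ∀ m n : ℕ × ℕ × ℕ, m ≠ n → ∀ x ∈ Hn m, ∀ y ∈ Hn n, ⟪x, y⟫ = 0)
    (hfin : ∀ n, FiniteDimensional ℂ (Hn n))
    (hdense : Dense ((⨆ n, Hn n : Submodule ℂ H) : Set H))
    (c : ℕ × ℕ × ℕ → ℝ)
    (hc1 : ∀ i, 1 ≤ c i)
    (hcmono : ∀ i i' : ℕ × ℕ × ℕ, i ≤ i' → i ≠ i' → c i < c i')
    (M : ℕ × ℕ × ℕ → ℝ)
    (hM : ∀ k : ℕ × ℕ × ℕ, 0 < M k ∧ ∀ i i' : ℕ × ℕ × ℕ, Near3 k i i' → |c i - c i'| ≤ M k)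
    (D : H →ₗ[ℂ] H)
    (hD : ∀ n : ℕ × ℕ × ℕ, ∀ ξ ∈ Hn n, D ξ = (c n : ℂ) • ξ)
    (T : H →L[ℂ] H) (k : ℕ × ℕ × ℕ)
    (hT : ∀ n : ℕ × ℕ × ℕ, ∀ ξ ∈ Hn n,
      T ξ ∈ (⨆ i ∈ {i : ℕ × ℕ × ℕ | Near3 k i n}, Hn i : Submodule ℂ H)) :
    (∀ n : ℕ × ℕ × ℕ, ∀ ξ ∈ Hn n, ‖D (T ξ) - T (D ξ)‖ ≤ M k * ‖T‖ * ‖ξ‖) ∧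
      ∃ S : H →L[ℂ] H, ∀ ξ ∈ (⨆ n, Hn n : Submodule ℂ H), S ξ = D (T ξ) - T (D ξ) := by
  obtain ⟨hMkpos, hMband⟩ := hM k
  have hpart1 : ∀ n : ℕ × ℕ × ℕ, ∀ ξ ∈ Hn n, ‖D (T ξ) - T (D ξ)‖ ≤ M k * ‖T‖ * ‖ξ‖ :=
    fun n ξ hξ => aux_bound horth D c hD T hMkpos.le
      (fun i hi => hMband i n hi) hξ (hT n ξ hξ)
  refine ⟨hpart1, ?_⟩
  -- the commutator as a (global) linear map
  set L : H →ₗ[ℂ] H := D ∘ₗ (T : H →ₗ[ℂ] H) - (T : H →ₗ[ℂ] H) ∘ₗ D with hLdef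
  have hL : ∀ x, L x = D (T x) - T (D x) := fun x => rfl
  -- L maps Hn n into the band sup around n
  have hLmem : ∀ n : ℕ × ℕ × ℕ, ∀ x ∈ Hn n,
      L x ∈ (⨆ i ∈ {i : ℕ × ℕ × ℕ | Near3 k i n}, Hn i : Submodule ℂ H) := by
    intro n x hx
    rw [hL]
    refine Submodule.sub_mem _ (aux_D_mem D c hD (hT n x hx)) ?_
    rw [hD n x hx, map_smul]
    exact Submodule.smul_mem _ _ (hT n x hx)
  -- residue classes
  set φ : ℕ × ℕ × ℕ → ℕ × ℕ × ℕ :=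
    fun n => (n.1 % (2*k.1+1), n.2.1 % (2*k.2.1+1), n.2.2 % (2*k.2.2+1)) with hφdef
  set R : Finset (ℕ × ℕ × ℕ) :=
    Finset.range (2*k.1+1) ×ˢ (Finset.range (2*k.2.1+1) ×ˢ Finset.range (2*k.2.2+1)) with hRdef
  have hφR : ∀ n, φ n ∈ R := by
    intro n
    simp only [hRdef, hφdef, Finset.mem_product, Finset.mem_range]
    exact ⟨Nat.mod_lt _ (by omega), Nat.mod_lt _ (by omega), Nat.mod_lt _ (by omega)⟩
  -- disjointness of bands within a residue class
  have hband : ∀ m n : ℕ × ℕ × ℕ, m ≠ n → φ m = φ n →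
      ∀ i ∈ {i : ℕ × ℕ × ℕ | Near3 k i m}, i ∉ {i : ℕ × ℕ × ℕ | Near3 k i n} := by
    intro m n hmn hφeq i him hin
    obtain ⟨h1m, h2m, h3m⟩ := him
    obtain ⟨h1n, h2n, h3n⟩ := hin
    have hφ1 : m.1 % (2*k.1+1) = n.1 % (2*k.1+1) := congrArg Prod.fst hφeq
    have hφ2 : m.2.1 % (2*k.2.1+1) = n.2.1 % (2*k.2.1+1) :=
      congrArg (fun p => p.2.1) hφeq
    have hφ3 : m.2.2 % (2*k.2.2+1) = n.2.2 % (2*k.2.2+1) :=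
      congrArg (fun p => p.2.2) hφeq
    apply hmn
    have e1 : m.1 = n.1 := aux_mod_close hφ1 (by
      rw [abs_le] at h1m h1n ⊢; push_cast; omega)
    have e2 : m.2.1 = n.2.1 := aux_mod_close hφ2 (by
      rw [abs_le] at h2m h2n ⊢; push_cast; omega)
    have e3 : m.2.2 = n.2.2 := aux_mod_close hφ3 (by
      rw [abs_le] at h3m h3n ⊢; push_cast; omega)
    rw [Prod.ext_iff, Prod.ext_iff]
    exact ⟨e1, e2, e3⟩
  -- global bound on V
  set C : ℝ := (R.card : ℝ) * (M k * ‖T‖) with hCdef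
  have hbound : ∀ ξ ∈ (⨆ n, Hn n : Submodule ℂ H), ‖L ξ‖ ≤ C * ‖ξ‖ := by
    intro ξ hξ
    obtain ⟨f, hf, hsum⟩ := (mem_iSup_iff_exists_finsupp _ _).mp hξ
    rw [Finsupp.sum] at hsum
    set s := f.support with hs
    have horthf : ∀ i ∈ s, ∀ j ∈ s, i ≠ j → ⟪f i, f j⟫ = 0 := fun i _ j _ hij =>
      horth i j hij _ (hf i) _ (hf j)
    have hnormξ : ‖ξ‖ ^ 2 = ∑ n ∈ s, ‖f n‖ ^ 2 := by
      rw [← hsum, aux_norm_sum_sq s _ horthf]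
    have hfiber : ∀ r : ℕ × ℕ × ℕ,
        ‖∑ n ∈ s.filter (fun n => φ n = r), L (f n)‖ ≤ M k * ‖T‖ * ‖ξ‖ := by
      intro r
      set t := s.filter (fun n => φ n = r) with ht
      have horthL : ∀ m ∈ t, ∀ n ∈ t, m ≠ n → ⟪L (f m), L (f n)⟫ = 0 := by
        intro m hm n hn hmn
        rw [ht, Finset.mem_filter] at hm hn
        exact aux_inner_biSup_zero Hn horth (hband m n hmn (hm.2.trans hn.2.symm))
          (hLmem m (f m) (hf m)) (hLmem n (f n) (hf n))
      have hsq : ‖∑ n ∈ t, L (f n)‖ ^ 2 ≤ (M k * ‖T‖ * ‖ξ‖) ^ 2 := by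
        rw [aux_norm_sum_sq t _ horthL]
        have h1 : ∀ n ∈ t, ‖L (f n)‖ ^ 2 ≤ (M k * ‖T‖) ^ 2 * ‖f n‖ ^ 2 := by
          intro n _
          have := hpart1 n (f n) (hf n)
          rw [← hL] at this
          nlinarith [norm_nonneg (L (f n)), norm_nonneg (f n),
            mul_nonneg (mul_nonneg hMkpos.le (norm_nonneg T)) (norm_nonneg (f n))]
        calc ∑ n ∈ t, ‖L (f n)‖ ^ 2 ≤ ∑ n ∈ t, (M k * ‖T‖) ^ 2 * ‖f n‖ ^ 2 :=
              Finset.sum_le_sum h1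
          _ ≤ ∑ n ∈ s, (M k * ‖T‖) ^ 2 * ‖f n‖ ^ 2 :=
              Finset.sum_le_sum_of_subset_of_nonneg (Finset.filter_subset _ _)
                (fun i _ _ => by positivity)
          _ = (M k * ‖T‖) ^ 2 * ‖ξ‖ ^ 2 := by rw [← Finset.mul_sum, hnormξ]
          _ = (M k * ‖T‖ * ‖ξ‖) ^ 2 := by ring
      have hnn : (0:ℝ) ≤ M k * ‖T‖ * ‖ξ‖ := by positivity
      nlinarith [norm_nonneg (∑ n ∈ t, L (f n))]
    have hLsum : L ξ = ∑ r ∈ R, ∑ n ∈ s.filter (fun n => φ n = r), L (f n) := by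
      rw [← hsum, map_sum, Finset.sum_fiberwise_of_maps_to (fun n _ => hφR n)]
    calc ‖L ξ‖ ≤ ∑ r ∈ R, ‖∑ n ∈ s.filter (fun n => φ n = r), L (f n)‖ := by
          rw [hLsum]; exact norm_sum_le _ _
      _ ≤ ∑ _r ∈ R, M k * ‖T‖ * ‖ξ‖ := Finset.sum_le_sum fun r _ => hfiber r
      _ = C * ‖ξ‖ := by rw [Finset.sum_const, nsmul_eq_mul, hCdef]; ring
  -- extend to a bounded operator
  set V : Submodule ℂ H := ⨆ n, Hn n with hVdef
  let g : V →ₗ[ℂ] H := L.comp V.subtype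
  have gb : ∀ v : V, ‖g v‖ ≤ C * ‖v‖ := fun v => hbound v v.2
  let gc : V →L[ℂ] H := g.mkContinuous C gb
  have hdr : DenseRange (V.subtypeL : V →L[ℂ] H) := by
    have : Set.range ((V.subtypeL : V →L[ℂ] H) : V → H) = (V : Set H) := Subtype.range_coe
    rw [DenseRange, this]
    exact hdense
  have h_e : IsUniformInducing ((V.subtypeL : V →L[ℂ] H) : V → H) :=
    isUniformEmbedding_subtype_val.isUniformInducing
  refine ⟨gc.extend V.subtypeL, fun ξ hξ => ?_⟩
  have := ContinuousLinearMap.extend_eq gc (e := V.subtypeL) hdr h_e ⟨ξ, hξ⟩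
  exact this
end

section
/- Let j > 1. Suppose μ, ν ∈ Λ(1) satisfy |μ| = |ν| < p_{j+1}, and let η and θ be Λ₁-words (composable with μ and ν respectively) with |μ·η| = |ν·θ|. Then there exist μ'', ν'' ∈ Φ_{p_j}, Λ₁-words η'' and θ'' with d(η'') ⊥ d(θ''), and a Λ₁-word ζ such that μ·η = μ''·η''·ζ and ν·θ = ν''·θ''·ζ in Λ(1). -/
/-! Combinatorial model of the Mitscher–Spielberg category of paths `Λ`. -/

/-- The letters (edges) of the category of paths: `A = α`, `B = β`, and the `Λ₂`-edges
`G j = γ^{(j)}`. -/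
inductive Letter : Type
  | A : Letter
  | B : Letter
  | G : ℕ → Letter
  deriving DecidableEq

/-- A letter lies in `{α, β}` (i.e. is a `Λ₁`-edge). -/
def Letter.isAB : Letter → Prop
  | .A => True
  | .B => True
  | .G _ => False

/-- `w` is a path from the vertex `v_m`: the `t`-th entry (1-indexed), if equal to `G j`,
must satisfy `1 ≤ j ≤ k (m + t − 1)`. -/
def IsPath (k : ℕ → ℕ) (m : ℕ) (w : List Letter) : Prop :=
  ∀ t : Fin w.length, ∀ j : ℕ, w.get t = Letter.G j → 1 ≤ j ∧ j ≤ k (m + (t : ℕ))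

/-- One elementary move: transpose two adjacent entries which both lie in `{α, β}`. -/
def Swap (w₁ w₂ : List Letter) : Prop :=
  ∃ (u v : List Letter) (a b : Letter), a.isAB ∧ b.isAB ∧
    w₁ = u ++ a :: b :: v ∧ w₂ = u ++ b :: a :: v

/-- The equivalence relation `≈` generated by the elementary moves; classes of paths from `v_m`
are the elements of `Λ(m)`. -/
def PEqv : List Letter → List Letter → Prop := Relation.EqvGen Swap

/-- The class of `μ` extends the class of `ν` (i.e. `μ = ν·ξ` for some class `ξ`). -/
def PExtends (μ ν : List Letter) : Prop := ∃ ξ : List Letter, PEqv μ (ν ++ ξ)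

/-- The class of `μ` extends the class of `ν` nontrivially. -/
def PExtendsNontrivially (μ ν : List Letter) : Prop :=
  ∃ ξ : List Letter, ξ ≠ [] ∧ PEqv μ (ν ++ ξ)

/-- `μ ⩓ ν`: the classes of `μ` and `ν` admit a common extension in `Λ(m)`. -/
def Meets (k : ℕ → ℕ) (m : ℕ) (μ ν : List Letter) : Prop :=
  ∃ l : List Letter, IsPath k m l ∧ PExtends l μ ∧ PExtends l ν

/-- The class of `w` belongs to `Φ_n^m ⊆ Λ(m)`: either `w` is empty, or `1 ≤ |w| ≤ n` and the
last letter of `w` is of the form `G j`. -/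
def InPhi (n : ℕ) (w : List Letter) : Prop :=
  w = [] ∨ (1 ≤ w.length ∧ w.length ≤ n ∧ ∃ j : ℕ, w.getLast? = some (Letter.G j))

/-- A `Λ₁`-word: all letters lie in `{α, β}`. -/
def IsLambda1 (w : List Letter) : Prop := ∀ a ∈ w, a.isAB

/-- The degrees `d(η) = (#α's, #β's)` and `d(θ)` are orthogonal in `ℕ²`. -/
def DegPerp (η θ : List Letter) : Prop :=
  η.count Letter.A * θ.count Letter.A + η.count Letter.B * θ.count Letter.B = 0

/-- `p : ℕ → ℕ` enumerates `{i ≥ 1 : k i ≠ 0}` in increasing order, with `p 0 = 0`. -/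
def Enumerates (k p : ℕ → ℕ) : Prop :=
  p 0 = 0 ∧ StrictMono p ∧ (∀ j, 1 ≤ j → 1 ≤ p j ∧ k (p j) ≠ 0) ∧
    ∀ i, 1 ≤ i → k i ≠ 0 → ∃ j, p j = i

/-- `(μ, ν) ∈ S_j`: both classes lie in `Φ_{p_j} = Φ_{p_j}^1 ⊆ Λ(1)` and at least one of them
has length `p_j`. -/
def InS (k p : ℕ → ℕ) (j : ℕ) (μ ν : List Letter) : Prop :=
  IsPath k 1 μ ∧ IsPath k 1 ν ∧ InPhi (p j) μ ∧ InPhi (p j) ν ∧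
    (μ.length = p j ∨ ν.length = p j)

/-- `(δ, ε) ∈ S_{j,ℓ}`: `δ = μ·η` and `ε = ν·θ` with `(μ, ν) ∈ S_j`, `η, θ` `Λ₁`-words,
`|δ| = |ε| = p_j + ℓ`, and `d(η) ⊥ d(θ)`. -/
def InSJL (k p : ℕ → ℕ) (j ℓ : ℕ) (δ ε : List Letter) : Prop :=
  ∃ μ ν η θ : List Letter, InS k p j μ ν ∧ IsLambda1 η ∧ IsLambda1 θ ∧
    PEqv δ (μ ++ η) ∧ PEqv ε (ν ++ θ) ∧
    δ.length = p j + ℓ ∧ ε.length = p j + ℓ ∧ DegPerp η θ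

/-! ### Auxiliary lemmas for `stmt6` -/

/-- Boolean version of `Letter.isAB`. -/
def Letter.isABb : Letter → Bool
  | .G _ => false
  | _ => true

lemma Letter.isAB_of_isABb {a : Letter} (h : a.isABb = true) : a.isAB := by
  cases a <;> simp_all [Letter.isABb, Letter.isAB]

lemma Letter.exists_G_of_not_isABb {a : Letter} (h : a.isABb ≠ true) : ∃ j, a = Letter.G j := by
  cases a <;> simp_all [Letter.isABb]

lemma pEqv_refl (w : List Letter) : PEqv w w := Relation.EqvGen.refl w

lemma pEqv_append_left (u : List Letter) {s t : List Letter} (h : PEqv s t) :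
    PEqv (u ++ s) (u ++ t) := by
  induction h with
  | rel x y hxy =>
    obtain ⟨u', v, a, b, ha, hb, h1, h2⟩ := hxy
    exact Relation.EqvGen.rel _ _
      ⟨u ++ u', v, a, b, ha, hb, by simp [h1], by simp [h2]⟩
  | refl x => exact Relation.EqvGen.refl _
  | symm x y _ ih => exact Relation.EqvGen.symm _ _ ih
  | trans x y z _ _ ih1 ih2 => exact Relation.EqvGen.trans _ _ _ ih1 ih2

lemma pEqv_of_perm : ∀ {w₁ w₂ : List Letter}, w₁.Perm w₂ → IsLambda1 w₁ → PEqv w₁ w₂ := by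
  intro w₁ w₂ hp
  induction hp with
  | nil => intro _; exact Relation.EqvGen.refl _
  | cons x _ ih =>
    intro h1
    have := ih (fun a ha => h1 a (List.mem_cons_of_mem _ ha))
    exact pEqv_append_left [x] this
  | swap x y l =>
    intro h1
    exact Relation.EqvGen.rel _ _
      ⟨[], l, y, x, h1 y (by simp), h1 x (by simp), by simp, by simp⟩
  | trans p₁ p₂ ih1 ih2 =>
    intro h1
    refine Relation.EqvGen.trans _ _ _ (ih1 h1) (ih2 ?_)
    intro a ha
    exact h1 a (p₁.mem_iff.mpr ha)

lemma isPath_prefix {k : ℕ → ℕ} {m : ℕ} {u v : List Letter} (h : IsPath k m (u ++ v)) :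
    IsPath k m u := by
  intro t j hj
  have ht : (t : ℕ) < (u ++ v).length := by simp; omega
  have := h ⟨t, ht⟩ j ?_
  · simpa using this
  · show (u ++ v).get ⟨t, ht⟩ = Letter.G j
    rw [List.get_eq_getElem, List.getElem_append_left t.isLt]
    simpa using hj

lemma isPath_getElem? {k : ℕ → ℕ} {m : ℕ} {w : List Letter} (h : IsPath k m w) {t j : ℕ}
    (ht : w[t]? = some (Letter.G j)) : 1 ≤ j ∧ j ≤ k (m + t) := by
  have hlt : t < w.length := by
    by_contra hc
    rw [List.getElem?_eq_none (by omega)] at ht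
    simp at ht
  have hget : w[t] = Letter.G j := by
    rw [List.getElem?_eq_getElem hlt] at ht
    simpa using ht
  exact h ⟨t, hlt⟩ j hget

lemma count_eq_zero_of_lambda1 {w : List Letter} (h : IsLambda1 w) (n : ℕ) :
    w.count (Letter.G n) = 0 := by
  rw [List.count_eq_zero]
  intro hmem
  exact (h _ hmem)

/-- Two `Λ₁`-words with the same letter counts are equivalent. -/
lemma pEqv_of_counts {w₁ w₂ : List Letter} (h1 : IsLambda1 w₁) (h2 : IsLambda1 w₂)
    (hA : w₁.count Letter.A = w₂.count Letter.A)
    (hB : w₁.count Letter.B = w₂.count Letter.B) : PEqv w₁ w₂ := by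
  refine pEqv_of_perm (List.perm_iff_count.mpr ?_) h1
  intro a
  cases a with
  | A => exact hA
  | B => exact hB
  | G n => rw [count_eq_zero_of_lambda1 h1, count_eq_zero_of_lambda1 h2]

/-- Decomposition of a path from `v_1` of length `< p (j+1)`: splitting off the maximal
`Λ₁`-suffix gives `w = w₀ ++ w₁` with `w₀ ∈ Φ_{p j}` and `w₁` a `Λ₁`-word. -/
lemma split_path (k p : ℕ → ℕ) (hp : Enumerates k p) (j : ℕ)
    {w : List Letter} (hw : IsPath k 1 w) (hlt : w.length < p (j + 1)) :
    ∃ w₀ w₁ : List Letter, w = w₀ ++ w₁ ∧ IsPath k 1 w₀ ∧ InPhi (p j) w₀ ∧ IsLambda1 w₁ := by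
  obtain ⟨hp0, hpmono, hpk, hpsurj⟩ := hp
  refine ⟨w.rdropWhile Letter.isABb, w.rtakeWhile Letter.isABb, ?_, ?_, ?_, ?_⟩
  · rw [List.rdropWhile, List.rtakeWhile, ← List.reverse_append,
      List.takeWhile_append_dropWhile, List.reverse_reverse]
  · have : w = w.rdropWhile Letter.isABb ++ w.rtakeWhile Letter.isABb := by
      rw [List.rdropWhile, List.rtakeWhile, ← List.reverse_append,
        List.takeWhile_append_dropWhile, List.reverse_reverse]
    rw [this] at hw
    exact isPath_prefix hw
  · by_cases hnil : w.rdropWhile Letter.isABb = []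
    · exact Or.inl hnil
    · right
      have hlast := List.rdropWhile_last_not Letter.isABb w hnil
      obtain ⟨j', hj'⟩ := Letter.exists_G_of_not_isABb hlast
      set w₀ := w.rdropWhile Letter.isABb with hw₀
      have hlen0 : 1 ≤ w₀.length := List.length_pos_iff.mpr hnil
      -- the last letter of `w₀` sits at position `w₀.length - 1` in `w`
      have hpre : w₀ <+: w := List.rdropWhile_prefix _ _
      obtain ⟨s, hs⟩ := hpre
      have hget : w[w₀.length - 1]? = some (Letter.G j') := by
        rw [← hs, List.getElem?_append_left (by omega),
          ← List.getLast?_eq_getElem?, List.getLast?_eq_getLast hnil, hj']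
      have hk := isPath_getElem? (by rw [← hs] at hw ⊢; exact hw) hget
      have hk' : k w₀.length ≠ 0 := by
        have : 1 + (w₀.length - 1) = w₀.length := by omega
        rw [this] at hk
        omega
      obtain ⟨i, hi⟩ := hpsurj w₀.length hlen0 hk'
      have hwlen : w₀.length ≤ w.length := by
        rw [← hs]; simp
      have hij : i < j + 1 := by
        by_contra hc
        have := hpmono.le_iff_le.mpr (by omega : j + 1 ≤ i)
        omega
      have : p i ≤ p j := hpmono.le_iff_le.mpr (by omega)
      refine ⟨hlen0, by omega, j', ?_⟩
      rw [List.getLast?_eq_getLast hnil, hj']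
  · intro a ha
    exact Letter.isAB_of_isABb (List.mem_rtakeWhile_imp ha)

lemma isLambda1_append {u v : List Letter} (hu : IsLambda1 u) (hv : IsLambda1 v) :
    IsLambda1 (u ++ v) := by
  intro a ha
  rcases List.mem_append.mp ha with h | h
  · exact hu a h
  · exact hv a h

lemma isLambda1_replicate_A (n : ℕ) : IsLambda1 (List.replicate n Letter.A) := by
  intro a ha
  rw [List.eq_of_mem_replicate ha]; trivial

lemma isLambda1_replicate_B (n : ℕ) : IsLambda1 (List.replicate n Letter.B) := by
  intro a ha
  rw [List.eq_of_mem_replicate ha]; trivial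

/-- cf. Theorem 3.2 of the paper.  Let `j > 1`.  If `μ, ν ∈ Λ(1)` have
`|μ| = |ν| < p_{j+1}` and `η, θ` are `Λ₁`-words, with `|μ·η| = |ν·θ|`, then there are
`μ'', ν'' ∈ Φ_{p_j}`, `Λ₁`-words `η'', θ''` with `d(η'') ⊥ d(θ'')`, and a `Λ₁`-word `ζ`, such
that `μ·η = μ''·η''·ζ` and `ν·θ = ν''·θ''·ζ` in `Λ(1)`. -/
theorem stmt6 (k : ℕ → ℕ) (hk0 : k 0 = 0)
    (hinf : {i : ℕ | 1 ≤ i ∧ k i ≠ 0}.Infinite)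
    (p : ℕ → ℕ) (hp : Enumerates k p)
    (j : ℕ) (hj : 1 < j)
    (μ ν : List Letter) (hμ : IsPath k 1 μ) (hν : IsPath k 1 ν)
    (hlen : μ.length = ν.length) (hlt : μ.length < p (j + 1))
    (η θ : List Letter) (hη : IsLambda1 η) (hθ : IsLambda1 θ)
    (hlen' : μ.length + η.length = ν.length + θ.length) :
    ∃ μ'' ν'' η'' θ'' ζ : List Letter,
      IsPath k 1 μ'' ∧ IsPath k 1 ν'' ∧ InPhi (p j) μ'' ∧ InPhi (p j) ν'' ∧
      IsLambda1 η'' ∧ IsLambda1 θ'' ∧ DegPerp η'' θ'' ∧ IsLambda1 ζ ∧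
      PEqv (μ ++ η) (μ'' ++ η'' ++ ζ) ∧ PEqv (ν ++ θ) (ν'' ++ θ'' ++ ζ) := by
  obtain ⟨μ₀, η₀, hμsplit, hμ₀path, hμ₀phi, hη₀⟩ := split_path k p hp j hμ hlt
  obtain ⟨ν₀, θ₀, hνsplit, hν₀path, hν₀phi, hθ₀⟩ := split_path k p hp j hν (hlen ▸ hlt)
  set a₁ := (η₀ ++ η).count Letter.A with ha₁
  set b₁ := (η₀ ++ η).count Letter.B with hb₁
  set a₂ := (θ₀ ++ θ).count Letter.A with ha₂
  set b₂ := (θ₀ ++ θ).count Letter.B with hb₂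
  refine ⟨μ₀, ν₀,
    List.replicate (a₁ - a₂) Letter.A ++ List.replicate (b₁ - b₂) Letter.B,
    List.replicate (a₂ - a₁) Letter.A ++ List.replicate (b₂ - b₁) Letter.B,
    List.replicate (min a₁ a₂) Letter.A ++ List.replicate (min b₁ b₂) Letter.B,
    hμ₀path, hν₀path, hμ₀phi, hν₀phi,
    isLambda1_append (isLambda1_replicate_A _) (isLambda1_replicate_B _),
    isLambda1_append (isLambda1_replicate_A _) (isLambda1_replicate_B _),
    ?_,
    isLambda1_append (isLambda1_replicate_A _) (isLambda1_replicate_B _),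
    ?_, ?_⟩
  · have h1 : (a₁ - a₂) * (a₂ - a₁) = 0 := by
      rcases Nat.le_total a₁ a₂ with h | h
      · rw [Nat.sub_eq_zero_of_le h, Nat.zero_mul]
      · rw [Nat.sub_eq_zero_of_le h, Nat.mul_zero]
    have h2 : (b₁ - b₂) * (b₂ - b₁) = 0 := by
      rcases Nat.le_total b₁ b₂ with h | h
      · rw [Nat.sub_eq_zero_of_le h, Nat.zero_mul]
      · rw [Nat.sub_eq_zero_of_le h, Nat.mul_zero]
    simp [DegPerp, List.count_append, List.count_replicate, h1, h2]
  · rw [hμsplit, List.append_assoc, List.append_assoc, List.append_assoc]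
    refine pEqv_append_left μ₀ (pEqv_of_counts (isLambda1_append hη₀ hη) ?_ ?_ ?_)
    · exact isLambda1_append (isLambda1_replicate_A _)
        (isLambda1_append (isLambda1_replicate_B _)
          (isLambda1_append (isLambda1_replicate_A _) (isLambda1_replicate_B _)))
    · simp [← ha₁, List.count_append, List.count_replicate] <;> omega
    · simp [← hb₁, List.count_append, List.count_replicate] <;> omega
  · rw [hνsplit, List.append_assoc, List.append_assoc, List.append_assoc]
    refine pEqv_append_left ν₀ (pEqv_of_counts (isLambda1_append hθ₀ hθ) ?_ ?_ ?_)
    · exact isLambda1_append (isLambda1_replicate_A _)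
        (isLambda1_append (isLambda1_replicate_B _)
          (isLambda1_append (isLambda1_replicate_A _) (isLambda1_replicate_B _)))
    · simp [← ha₂, List.count_append, List.count_replicate] <;> omega
    · simp [← hb₂, List.count_append, List.count_replicate] <;> omega
end
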